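/- Let E be a Hilbert space and G ∈ C¹(E, ℝ) be positively homogeneous of degree q+1 (q > 1) with DG : E → E* compact, and suppose m := sup_{v≠0} G(v)/‖v‖^{q+1} > 0. Then the set K₀ := { v ∈ E : ‖v‖ = 1, G(v) = m } is nonempty and compact. -/

import Mathlib

open Real Topology Filter

section Aux

variable {E : Type*} [NormedAddCommGroup E] [InnerProductSpace ℝ E] [CompleteSpace E]

/-- Mean value theorem along a segment. -/
lemma aux_mvt (G : E → ℝ) (hG : Differentiable ℝ G) (v u : E) :
    ∃ w ∈ segment ℝ v u, G u - G v = fderiv ℝ G w (u - v) := by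
  set L : ℝ → E := fun t => v + t • (u - v) with hL
  have hline : ∀ t : ℝ, HasDerivAt L (u - v) t := by
    intro t
    simpa [hL] using ((hasDerivAt_id t).smul_const (u - v)).const_add v
  have hg : ∀ t : ℝ, HasDerivAt (fun s => G (L s)) (fderiv ℝ G (L t) (u - v)) t := by
    intro t
    exact ((hG (L t)).hasFDerivAt).comp_hasDerivAt t (hline t)
  obtain ⟨c, hc, hceq⟩ := exists_hasDerivAt_eq_slope (fun s => G (L s))
    (fun t => fderiv ℝ G (L t) (u - v)) one_pos
    (fun t _ => (hg t).continuousAt.continuousWithinAt) (fun t _ => hg t)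
  refine ⟨L c, ?_, ?_⟩
  · rw [segment_eq_image']
    exact ⟨c, ⟨hc.1.le, hc.2.le⟩, rfl⟩
  · have : L 1 = u := by simp [hL]
    have h0 : L 0 = v := by simp [hL]
    rw [hceq, this, h0]; ring

end Aux

theorem stmt15 {E : Type*} [NormedAddCommGroup E] [InnerProductSpace ℝ E]
    [CompleteSpace E]
    (q : ℝ) (hq : 1 < q) (G : E → ℝ) (hG : ContDiff ℝ 1 G)
    (hhom : ∀ c : ℝ, 0 ≤ c → ∀ v : E, G (c • v) = c ^ (q+1) * G v)
    (hcomp : ∀ s : Set E, Bornology.IsBounded s → IsCompact (closure (fderiv ℝ G '' s)))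
    (m : ℝ) (hm : m = sSup {x : ℝ | ∃ v : E, v ≠ 0 ∧ x = G v / ‖v‖ ^ (q+1)})
    (hmpos : 0 < m) :
    {v : E | ‖v‖ = 1 ∧ G v = m}.Nonempty ∧ IsCompact {v : E | ‖v‖ = 1 ∧ G v = m} := by
  have hq1 : (0:ℝ) < q + 1 := by linarith
  have hGdiff : Differentiable ℝ G := hG.differentiable one_ne_zero
  set S : Set ℝ := {x : ℝ | ∃ v : E, v ≠ 0 ∧ x = G v / ‖v‖ ^ (q+1)} with hS
  -- S is nonempty and bounded above
  have hSne : S.Nonempty := by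
    by_contra h
    rw [Set.not_nonempty_iff_eq_empty] at h
    rw [hm, h, Real.sSup_empty] at hmpos; exact lt_irrefl 0 hmpos
  have hSbdd : BddAbove S := by
    by_contra h
    rw [hm, Real.sSup_of_not_bddAbove h] at hmpos; exact lt_irrefl 0 hmpos
  have hG0 : G 0 = 0 := by
    have := hhom 0 le_rfl 0
    rwa [smul_zero, Real.zero_rpow (by linarith), zero_mul] at this
  -- G u ≤ m * ‖u‖ ^ (q+1)
  have hle : ∀ u : E, G u ≤ m * ‖u‖ ^ (q+1) := by
    intro u
    rcases eq_or_ne u 0 with rfl | hu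
    · rw [hG0, norm_zero, Real.zero_rpow (by linarith), mul_zero]
    · have hmem : G u / ‖u‖ ^ (q+1) ∈ S := ⟨u, hu, rfl⟩
      have := le_csSup hSbdd hmem
      rw [← hm] at this
      have hpos : (0:ℝ) < ‖u‖ ^ (q+1) :=
        Real.rpow_pos_of_pos (norm_pos_iff.mpr hu) _
      calc G u = (G u / ‖u‖ ^ (q+1)) * ‖u‖ ^ (q+1) := by field_simp
        _ ≤ m * ‖u‖ ^ (q+1) := by
            exact mul_le_mul_of_nonneg_right this hpos.le
  -- values of G at unit vectors realize S
  have hunit : ∀ w : E, w ≠ 0 → G (‖w‖⁻¹ • w) = G w / ‖w‖ ^ (q+1) := by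
    intro w hw
    have hw' : ‖w‖ ≠ 0 := norm_ne_zero_iff.mpr hw
    have h1 := hhom ‖w‖ (norm_nonneg w) (‖w‖⁻¹ • w)
    rw [smul_smul, mul_inv_cancel₀ hw', one_smul] at h1
    have hpos : (0:ℝ) < ‖w‖ ^ (q+1) := Real.rpow_pos_of_pos (norm_pos_iff.mpr hw) _
    rw [h1]
    field_simp
  -- Setup: Riesz duality and weak-* compact ball
  set T := InnerProductSpace.toDual ℝ E with hT
  set D : Set (StrongDual ℝ E) := closure (fderiv ℝ G '' Metric.closedBall 0 1) with hD
  have hDcomp : IsCompact D := hcomp _ Metric.isBounded_closedBall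
  set K : Set (WeakDual ℝ E) := WeakDual.toStrongDual ⁻¹' Metric.closedBall 0 1 with hK
  have hKcomp : IsCompact K := WeakDual.isCompact_closedBall (𝕜 := ℝ) (E := E) 0 1
  set ψ : WeakDual ℝ E → ℝ := fun f => G (T.symm (WeakDual.toStrongDual f)) with hψ
  -- ψ is continuous on K
  have hψcont : ContinuousOn ψ K := by
    intro f₀ hf₀
    set v := T.symm (WeakDual.toStrongDual f₀) with hv
    have hvball : v ∈ Metric.closedBall (0:E) 1 := by
      simp only [hK, Set.mem_preimage, Metric.mem_closedBall, dist_zero_right] at hf₀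
      rw [Metric.mem_closedBall, dist_zero_right, hv, LinearIsometryEquiv.norm_map]
      exact hf₀
    rw [ContinuousWithinAt, Metric.tendsto_nhds]
    intro ε hε
    obtain ⟨t, htfin, htsub⟩ :=
      Metric.totallyBounded_iff.mp hDcomp.totallyBounded (ε/4) (by linarith)
    have hev : ∀ᶠ f in 𝓝 f₀,
        ∀ g ∈ t, |(f : WeakDual ℝ E) (T.symm g) - f₀ (T.symm g)| < ε/4 := by
      rw [Filter.eventually_all_finite htfin]
      intro g hg
      have hc : Continuous fun f : WeakDual ℝ E => f (T.symm g) :=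
        WeakDual.eval_continuous _
      have h2 := Metric.tendsto_nhds.mp (hc.tendsto f₀) (ε/4) (by linarith)
      refine h2.mono fun f hf => ?_
      rwa [Real.dist_eq] at hf
    filter_upwards [nhdsWithin_le_nhds hev, self_mem_nhdsWithin] with f hf hfK
    set u := T.symm (WeakDual.toStrongDual f) with hu
    have huball : u ∈ Metric.closedBall (0:E) 1 := by
      simp only [hK, Set.mem_preimage, Metric.mem_closedBall, dist_zero_right] at hfK
      rw [Metric.mem_closedBall, dist_zero_right, hu, LinearIsometryEquiv.norm_map]
      exact hfK
    obtain ⟨w, hwseg, hwe⟩ := aux_mvt G hGdiff v u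
    have hwball : w ∈ Metric.closedBall (0:E) 1 :=
      (convex_closedBall (0:E) 1).segment_subset hvball huball hwseg
    have hwD : fderiv ℝ G w ∈ D := subset_closure ⟨w, hwball, rfl⟩
    obtain ⟨g, hgt, hgball⟩ : ∃ g ∈ t, fderiv ℝ G w ∈ Metric.ball g (ε/4) := by
      simpa using htsub hwD
    have hgnorm : ‖fderiv ℝ G w - g‖ < ε/4 := by
      rw [← dist_eq_norm]
      simpa [Metric.mem_ball, dist_comm] using hgball
    have hguv : g (u - v) = f (T.symm g) - f₀ (T.symm g) := by
      have key : ∀ (h : WeakDual ℝ E),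
          g (T.symm (WeakDual.toStrongDual h)) = h (T.symm g) := by
        intro h
        rw [← InnerProductSpace.toDual_symm_apply (𝕜 := ℝ),
          real_inner_comm, InnerProductSpace.toDual_symm_apply]
        rfl
      rw [map_sub, hu, hv, key f, key f₀]
    have hnormuv : ‖u - v‖ ≤ 2 := by
      have h1 : ‖u‖ ≤ 1 := by simpa [Metric.mem_closedBall, dist_zero_right] using huball
      have h2 : ‖v‖ ≤ 1 := by simpa [Metric.mem_closedBall, dist_zero_right] using hvball
      calc ‖u - v‖ ≤ ‖u‖ + ‖v‖ := norm_sub_le u v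
        _ ≤ 2 := by linarith
    have hbound : |G u - G v| < ε := by
      rw [hwe]
      have hsplit : fderiv ℝ G w (u - v)
          = (fderiv ℝ G w - g) (u - v) + g (u - v) := by
        simp [ContinuousLinearMap.sub_apply]
      rw [hsplit]
      have h1 : |(fderiv ℝ G w - g) (u - v)| ≤ ε/4 * 2 := by
        calc |(fderiv ℝ G w - g) (u - v)| ≤ ‖fderiv ℝ G w - g‖ * ‖u - v‖ :=
              (fderiv ℝ G w - g).le_opNorm (u - v)
          _ ≤ ε/4 * 2 := by
              apply mul_le_mul hgnorm.le hnormuv (norm_nonneg _) (by linarith)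
      have h2 : |g (u - v)| < ε/4 := by
        rw [hguv]; exact hf g hgt
      calc |(fderiv ℝ G w - g) (u - v) + g (u - v)|
          ≤ |(fderiv ℝ G w - g) (u - v)| + |g (u - v)| := abs_add_le _ _
        _ < ε/4 * 2 + ε/4 := by linarith
        _ < ε := by linarith
    rw [Real.dist_eq]
    exact hbound
  -- ψ attains its maximum on K
  have hKne : K.Nonempty := ⟨0, by simp [hK]⟩
  obtain ⟨f₀, hf₀K, hf₀max⟩ := hKcomp.exists_isMaxOn hKne hψcont
  set u₀ := T.symm (WeakDual.toStrongDual f₀) with hu₀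
  have hu₀n : ‖u₀‖ ≤ 1 := by
    simp only [hK, Set.mem_preimage, Metric.mem_closedBall, dist_zero_right] at hf₀K
    rw [hu₀, LinearIsometryEquiv.norm_map]
    exact hf₀K
  have hsup : ∀ x : E, ‖x‖ ≤ 1 → G x ≤ G u₀ := by
    intro x hx
    have hmem : (StrongDual.toWeakDual (T x)) ∈ K := by
      simp only [hK, Set.mem_preimage, Metric.mem_closedBall, dist_zero_right]
      show ‖T x‖ ≤ 1
      rw [LinearIsometryEquiv.norm_map]
      exact hx
    have h2 := hf₀max hmem
    simp only [hψ, Set.mem_setOf_eq] at h2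
    have h3 : T.symm (WeakDual.toStrongDual (StrongDual.toWeakDual (T x))) = x := by
      show T.symm (T x) = x
      exact T.symm_apply_apply x
    rw [h3] at h2
    exact h2
  -- u₀ is a maximizer with value m and unit norm
  have hm_le : m ≤ G u₀ := by
    rw [hm]
    apply csSup_le hSne
    rintro s ⟨w, hw, rfl⟩
    rw [← hunit w hw]
    apply hsup
    have hw' : ‖w‖ ≠ 0 := norm_ne_zero_iff.mpr hw
    rw [norm_smul, norm_inv, norm_norm, inv_mul_cancel₀ hw']
  have hGu₀ : G u₀ = m := by
    refine le_antisymm ?_ hm_le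
    have h1 : ‖u₀‖ ^ (q+1) ≤ 1 := Real.rpow_le_one (norm_nonneg _) hu₀n hq1.le
    calc G u₀ ≤ m * ‖u₀‖ ^ (q+1) := hle u₀
      _ ≤ m * 1 := by nlinarith
      _ = m := mul_one m
  have hnorm1 : ‖u₀‖ = 1 := by
    by_contra h
    have hlt : ‖u₀‖ < 1 := lt_of_le_of_ne hu₀n h
    have h1 : ‖u₀‖ ^ (q+1) < 1 := Real.rpow_lt_one (norm_nonneg _) hlt hq1
    have h2 := hle u₀
    rw [hGu₀] at h2
    nlinarith
  refine ⟨⟨u₀, hnorm1, hGu₀⟩, ?_⟩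
  -- Compactness of the set of maximizers
  have hclosed : IsClosed {v : E | ‖v‖ = 1 ∧ G v = m} := by
    have : {v : E | ‖v‖ = 1 ∧ G v = m} = {v : E | ‖v‖ = 1} ∩ {v : E | G v = m} := rfl
    rw [this]
    exact (isClosed_eq continuous_norm continuous_const).inter
      (isClosed_eq hG.continuous continuous_const)
  set Φ : StrongDual ℝ E → E := fun g => ((q+1)*m)⁻¹ • T.symm g with hΦ
  have hΦcont : Continuous Φ := (T.symm.continuous.const_smul _)
  have hsub : {v : E | ‖v‖ = 1 ∧ G v = m} ⊆ Φ '' D := by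
    rintro v ⟨hv1, hvm⟩
    have hFle : ∀ u : E, G u - m * ‖u‖ ^ (q+1) ≤ G v - m * ‖v‖ ^ (q+1) := by
      intro u
      have h1 : G v - m * ‖v‖ ^ (q+1) = 0 := by
        rw [hvm, hv1, Real.one_rpow, mul_one, sub_self]
      rw [h1]
      have := hle u
      linarith
    have hmax : IsLocalMax (fun u : E => G u - m * ‖u‖ ^ (q+1)) v :=
      Filter.Eventually.of_forall hFle
    have hNd : HasFDerivAt (fun u : E => ‖u‖ ^ (q+1))
        (((q+1) * ‖v‖ ^ (q+1-2)) • innerSL ℝ v) v := hasFDerivAt_norm_rpow v (by linarith)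
    have hFd : HasFDerivAt (fun u : E => G u - m * ‖u‖ ^ (q+1))
        (fderiv ℝ G v - m • (((q+1) * ‖v‖ ^ (q+1-2)) • innerSL ℝ v)) v :=
      (hGdiff v).hasFDerivAt.sub (hNd.const_mul m)
    have hzero := hmax.hasFDerivAt_eq_zero hFd
    rw [sub_eq_zero] at hzero
    have h1 : ‖v‖ ^ (q+1-2) = 1 := by rw [hv1, Real.one_rpow]
    have h2 : fderiv ℝ G v = ((q+1)*m) • innerSL ℝ v := by
      rw [hzero, h1, mul_one, smul_smul]
      ring_nf
    have hvne : v ≠ 0 := by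
      intro h0
      rw [h0, norm_zero] at hv1
      norm_num at hv1
    have hvD : fderiv ℝ G v ∈ D := by
      apply subset_closure
      exact ⟨v, by simp [Metric.mem_closedBall, hv1], rfl⟩
    refine ⟨fderiv ℝ G v, hvD, ?_⟩
    rw [hΦ]
    simp only
    rw [h2]
    have h3 : T.symm ((((q+1)*m)) • innerSL ℝ v) = ((q+1)*m) • T.symm (innerSL ℝ v) := by
      rw [map_smulₛₗ]
      simp
    rw [h3, smul_smul]
    have h4 : T.symm (innerSL ℝ v) = v := by
      have : T v = innerSL ℝ v := by
        ext y
        simp [hT, InnerProductSpace.toDual_apply_apply]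
      rw [← this, T.symm_apply_apply]
    rw [h4, inv_mul_cancel₀, one_smul]
    positivity
  exact (hDcomp.image hΦcont).of_isClosed_subset hclosed hsub
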